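/- Let q be a prime power and let H = {(x,y) ∈ F_{q^2}^2 : x^{q+1} = y^q + y}. The family of functions H → F_{q^2} given by (x,y) ↦ x^i y^j, indexed by the pairs (i,j) with 0 ≤ i < q^2 and 0 ≤ j < q, is linearly independent over F_{q^2}. -/
import Mathlib

open Polynomial Finset

/-- Key counting fact: for each `x`, the fiber `{y : y^q + y = x^(q+1)}` has at least `q`
elements. -/
lemma hermitian_fiber_card (q : ℕ) (hq2 : 2 ≤ q)
    (F : Type*) [Field F] [Fintype F] [DecidableEq F] (hF : Fintype.card F = q ^ 2)
    (hadd : ∀ a b : F, (a + b) ^ q = a ^ q + b ^ q) (x : F) :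
    q ≤ (Finset.univ.filter (fun y : F => y ^ q + y = x ^ (q + 1))).card := by
  have hq0 : 0 < q := by omega
  have hpow_card : ∀ a : F, a ^ q ^ 2 = a := by
    intro a
    have := FiniteField.pow_card a (K := F)
    rwa [hF] at this
  have hsub : ∀ a b : F, (a - b) ^ q = a ^ q - b ^ q := by
    intro a b
    have h := hadd (a - b) b
    rw [sub_add_cancel] at h
    exact eq_sub_of_add_eq h.symm
  set K : Finset F := Finset.univ.filter (fun y : F => y ^ q + y = 0) with hK
  set T : Finset F := Finset.univ.filter (fun t : F => t ^ q = t) with hT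
  set R : Finset F := Finset.image (fun y : F => y ^ q + y) Finset.univ with hR
  -- roots bound for K
  have hKle : K.card ≤ q := by
    by_contra h
    push_neg at h
    have hP : (X ^ q + X : F[X]) = 0 := by
      apply Polynomial.eq_zero_of_natDegree_lt_card_of_eval_eq_zero' _ K
      · intro y hy
        simp only [hK, Finset.mem_filter] at hy
        simp [hy.2]
      · calc (X ^ q + X : F[X]).natDegree ≤ q := by
              apply (Polynomial.natDegree_add_le _ _).trans
              simp [Polynomial.natDegree_X_pow]
              omega
            _ < K.card := h
    have := congrArg (fun p : F[X] => p.coeff q) hP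
    simp only [Polynomial.coeff_add, Polynomial.coeff_X_pow, Polynomial.coeff_X,
      Polynomial.coeff_zero, if_pos rfl, if_neg (by omega : ¬ (1 = q)), add_zero] at this
    exact one_ne_zero this
  -- roots bound for T
  have hTle : T.card ≤ q := by
    by_contra h
    push_neg at h
    have hP : (X ^ q - X : F[X]) = 0 := by
      apply Polynomial.eq_zero_of_natDegree_lt_card_of_eval_eq_zero' _ T
      · intro y hy
        simp only [hT, Finset.mem_filter] at hy
        simp [hy.2]
      · calc (X ^ q - X : F[X]).natDegree ≤ q := by
              apply (Polynomial.natDegree_sub_le _ _).trans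
              simp [Polynomial.natDegree_X_pow]
              omega
            _ < T.card := h
    have := congrArg (fun p : F[X] => p.coeff q) hP
    simp only [Polynomial.coeff_sub, Polynomial.coeff_X_pow, Polynomial.coeff_X,
      Polynomial.coeff_zero, if_pos rfl, if_neg (by omega : ¬ (1 = q)), sub_zero] at this
    exact one_ne_zero this
  -- all nonempty fibers have card equal to K.card
  have hfib : ∀ c ∈ R, (Finset.univ.filter (fun y : F => y ^ q + y = c)).card = K.card := by
    intro c hc
    simp only [hR, Finset.mem_image, Finset.mem_univ, true_and] at hc
    obtain ⟨y0, hy0⟩ := hc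
    apply Finset.card_bij' (fun y _ => y - y0) (fun z _ => z + y0)
    · intro y hy
      simp only [hK, Finset.mem_filter, Finset.mem_univ, true_and] at hy ⊢
      rw [hsub]
      linear_combination hy - hy0
    · intro z hz
      simp only [hK, Finset.mem_filter, Finset.mem_univ, true_and] at hz ⊢
      rw [hadd]
      linear_combination hz + hy0
    · intros; ring
    · intros; ring
  -- card F = R.card * K.card
  have hcardsum : q ^ 2 = R.card * K.card := by
    have h1 : (Finset.univ : Finset F).card
        = ∑ c ∈ R, (Finset.univ.filter (fun y : F => y ^ q + y = c)).card := by
      apply Finset.card_eq_sum_card_fiberwise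
      intro y _
      simp [hR]
    rw [Finset.sum_congr rfl hfib, Finset.sum_const, smul_eq_mul] at h1
    rw [← hF, ← Finset.card_univ, h1]
  -- R ⊆ T
  have hRT : R ⊆ T := by
    intro c hc
    simp only [hR, Finset.mem_image, Finset.mem_univ, true_and] at hc
    obtain ⟨y, rfl⟩ := hc
    simp only [hT, Finset.mem_filter, Finset.mem_univ, true_and]
    rw [hadd, ← pow_mul, ← sq, hpow_card]
    ring
  -- q ≤ R.card
  have hRge : q ≤ R.card := by
    have : q * q ≤ R.card * q := by
      calc q * q = q ^ 2 := (sq q).symm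
        _ = R.card * K.card := hcardsum
        _ ≤ R.card * q := Nat.mul_le_mul_left _ hKle
    exact Nat.le_of_mul_le_mul_right this hq0
  have hReqT : R = T := Finset.eq_of_subset_of_card_le hRT (hTle.trans hRge)
  -- x^(q+1) ∈ T
  have hxT : x ^ (q + 1) ∈ T := by
    simp only [hT, Finset.mem_filter, Finset.mem_univ, true_and]
    rw [← pow_mul]
    have : (q + 1) * q = q ^ 2 + q := by ring
    rw [this, pow_add, hpow_card, ← pow_succ']
  have hxR : x ^ (q + 1) ∈ R := by rw [hReqT]; exact hxT
  -- K.card ≥ q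
  have hKge : q ≤ K.card := by
    have hRle : R.card ≤ q := hReqT ▸ hTle
    have : q * q ≤ q * K.card := by
      calc q * q = q ^ 2 := (sq q).symm
        _ = R.card * K.card := hcardsum
        _ ≤ q * K.card := Nat.mul_le_mul_right _ hRle
    exact Nat.le_of_mul_le_mul_left this hq0
  rw [hfib _ hxR]
  exact hKge

theorem hermitian_monomials_linearIndependent (q : ℕ) (hq : IsPrimePow q)
    (F : Type*) [Field F] [Fintype F] (hF : Fintype.card F = q ^ 2) :
    LinearIndependent F
      (fun (ij : Fin (q ^ 2) × Fin q) =>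
        (fun p : {p : F × F // p.1 ^ (q + 1) = p.2 ^ q + p.2} =>
          p.val.1 ^ (ij.1 : ℕ) * p.val.2 ^ (ij.2 : ℕ))) := by
  classical
  have hq2 : 2 ≤ q := hq.two_le
  have hq0 : 0 < q := by omega
  -- characteristic
  obtain ⟨p, k, hp, hk, rfl⟩ := hq
  have hp' : p.Prime := Nat.prime_iff.mpr hp
  haveI : Fact p.Prime := ⟨hp'⟩
  have hr := CharP.char_is_prime F (ringChar F)
  obtain ⟨n, -, hcard⟩ := FiniteField.card F (ringChar F)
  have hpr : p = ringChar F := by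
    have hdvd : p ∣ ringChar F ^ (n : ℕ) := by
      rw [← hcard, hF, ← pow_mul]
      exact dvd_pow_self p (by positivity)
    exact ((Nat.prime_dvd_prime_iff_eq hp' hr).mp (hp'.dvd_of_dvd_pow hdvd))
  haveI : CharP F p := hpr ▸ ringChar.charP F
  have hadd : ∀ a b : F, (a + b) ^ p ^ k = a ^ p ^ k + b ^ p ^ k := fun a b =>
    add_pow_char_pow a b p k
  set q := p ^ k with hqdef
  -- main argument
  rw [Fintype.linearIndependent_iff]
  intro g hg
  have h0 : ∀ x y : F, x ^ (q + 1) = y ^ q + y →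
      ∑ ij : Fin (q ^ 2) × Fin q, g ij * (x ^ (ij.1 : ℕ) * y ^ (ij.2 : ℕ)) = 0 := by
    intro x y hxy
    have := congrFun hg ⟨(x, y), hxy⟩
    simpa using this
  set A : Fin q → F[X] := fun j => ∑ i : Fin (q ^ 2), C (g (i, j)) * X ^ (i : ℕ) with hA
  have hAeval : ∀ (j : Fin q) (x : F), (A j).eval x = ∑ i : Fin (q ^ 2), g (i, j) * x ^ (i : ℕ) := by
    intro j x
    simp [hA, Polynomial.eval_finset_sum]
  have hAdeg : ∀ j : Fin q, (A j).natDegree < q ^ 2 := by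
    intro j
    have : (A j).natDegree ≤ q ^ 2 - 1 := by
      apply Polynomial.natDegree_sum_le_of_forall_le
      intro i _
      apply (Polynomial.natDegree_C_mul_le _ _).trans
      rw [Polynomial.natDegree_X_pow]
      omega
    have hq2pos : 0 < q ^ 2 := by positivity
    omega
  -- each A j vanishes everywhere
  have hAzero : ∀ (x : F) (j : Fin q), (A j).eval x = 0 := by
    intro x j
    set S : Finset F := Finset.univ.filter (fun y : F => y ^ q + y = x ^ (q + 1)) with hS
    have hScard : q ≤ S.card := hermitian_fiber_card q hq2 F hF hadd x
    set B : F[X] := ∑ j' : Fin q, C ((A j').eval x) * X ^ (j' : ℕ) with hB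
    have hBzero : B = 0 := by
      apply Polynomial.eq_zero_of_natDegree_lt_card_of_eval_eq_zero' B S
      · intro y hy
        simp only [hS, Finset.mem_filter, Finset.mem_univ, true_and] at hy
        rw [hB]
        simp only [Polynomial.eval_finset_sum, Polynomial.eval_mul, Polynomial.eval_C,
          Polynomial.eval_pow, Polynomial.eval_X]
        have := h0 x y hy.symm
        rw [Fintype.sum_prod_type_right] at this
        rw [← this]
        congr 1
        ext j'
        rw [hAeval, Finset.sum_mul]
        congr 1
        ext i
        ring
      · have hBdeg : B.natDegree ≤ q - 1 := by
          apply Polynomial.natDegree_sum_le_of_forall_le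
          intro j' _
          apply (Polynomial.natDegree_C_mul_le _ _).trans
          rw [Polynomial.natDegree_X_pow]
          omega
        omega
    have hco := congrArg (fun P : F[X] => P.coeff (j : ℕ)) hBzero
    simp only [hB, Polynomial.finset_sum_coeff, Polynomial.coeff_C_mul,
      Polynomial.coeff_X_pow, Polynomial.coeff_zero, mul_ite, mul_one, mul_zero,
      Fin.val_eq_val, Finset.sum_ite_eq, Finset.mem_univ, if_true] at hco
    exact hco
  intro ij
  obtain ⟨i, j⟩ := ij
  have hAj : A j = 0 := by
    apply Polynomial.eq_zero_of_natDegree_lt_card_of_eval_eq_zero (A j) Function.injective_id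
      (fun x => hAzero x j)
    rw [hF]
    exact hAdeg j
  have hco := congrArg (fun P : F[X] => P.coeff (i : ℕ)) hAj
  simp only [hA, Polynomial.finset_sum_coeff, Polynomial.coeff_C_mul,
    Polynomial.coeff_X_pow, Polynomial.coeff_zero, mul_ite, mul_one, mul_zero,
    Fin.val_eq_val, Finset.sum_ite_eq, Finset.mem_univ, if_true] at hco
  exact hco
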